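/- Fix r, h, w ∈ ℕ. For each i ∈ {1,…,r} let α_i, β_i > 0, let μ_{a,i}, σ_{a,i} ∈ ℝ^h and μ_{b,i}, σ_{b,i} ∈ ℝ^w with all σ-entries positive, and set μ_{γ,i} = α_i/β_i and E_i[log γ] = ∫_{(0,∞)} log γ dGamma(α_i, β_i)(γ). Then Σ_{i=1}^{r} ∫_{(0,∞)} [ Σ_{j=1}^{h} KL(N(μ_{a,i,j}, σ_{a,i,j}²) ‖ N(0, γ^{-1})) + Σ_{j=1}^{w} KL(N(μ_{b,i,j}, σ_{b,i,j}²) ‖ N(0, γ^{-1})) ] dGamma(α_i, β_i)(γ) = (1/2) Σ_{i=1}^{r} [ μ_{γ,i}·(‖μ_{a,i}‖₂² + ‖σ_{a,i}‖₂² + ‖μ_{b,i}‖₂² + ‖σ_{b,i}‖₂²) − Σ_{j=1}^{h} log σ_{a,i,j}² − Σ_{j=1}^{w} log σ_{b,i,j}² − (h+w)(1 + E_i[log γ]) ]. In particular, this expectation equals the low-rank loss term ℓ_rank of the paper's Eq. (28) up to an additive constant that does not depend on the Gaussian parameters μ_A, σ_A, μ_B, σ_B. -/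

import Mathlib

open MeasureTheory ProbabilityTheory
open scoped ENNReal NNReal

/- Kullback–Leibler divergence `KL(q‖p)`, valued in `[0,∞]`:
`∫ log (dq/dp) dq` if `q ≪ p` and the log-density is `q`-integrable, and `+∞` otherwise. -/
open Classical in
noncomputable def klDiv {Ω : Type*} [MeasurableSpace Ω] (q p : Measure Ω) : ℝ≥0∞ :=
  if q ≪ p ∧ Integrable (llr q p) q then ENNReal.ofReal (∫ x, llr q p x ∂q) else ⊤

/- `KL(N(μ, σ²) ‖ N(0, γ⁻¹))` as a real number, where `N` is the real Gaussian measure. -/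
noncomputable def gaussKL (μ σ γ : ℝ) : ℝ :=
  (klDiv (gaussianReal μ (Real.toNNReal (σ ^ 2))) (gaussianReal 0 (Real.toNNReal γ⁻¹))).toReal

section Helpers
open Real Set

lemma my_integral_withDensity_ofReal {d : ℝ → ℝ} (hd : Measurable d) (hd0 : ∀ x, 0 ≤ d x)
    (g : ℝ → ℝ) :
    ∫ x, g x ∂(volume.withDensity (fun x => ENNReal.ofReal (d x))) = ∫ x, d x * g x := by
  have h : (fun x => ENNReal.ofReal (d x)) = fun x => ((Real.toNNReal (d x) : ℝ≥0) : ℝ≥0∞) := rfl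
  rw [h, integral_withDensity_eq_integral_smul hd.real_toNNReal]
  congr 1; funext x
  simp [NNReal.smul_def, Real.coe_toNNReal _ (hd0 x)]

lemma my_integrable_withDensity_ofReal {d g : ℝ → ℝ} (hd : Measurable d) (hd0 : ∀ x, 0 ≤ d x) :
    Integrable g (volume.withDensity (fun x => ENNReal.ofReal (d x))) ↔
      Integrable (fun x => d x * g x) volume := by
  rw [integrable_withDensity_iff hd.ennreal_ofReal (ae_of_all _ fun x => ENNReal.ofReal_lt_top)]
  have : (fun x => g x * (ENNReal.ofReal (d x)).toReal) = fun x => d x * g x := by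
    funext x; rw [ENNReal.toReal_ofReal (hd0 x)]; ring
  rw [this]

lemma my_int_sq_exp {b : ℝ} (hb : 0 < b) :
    Integrable fun x : ℝ => x ^ 2 * exp (-b * x ^ 2) := by
  have h := integrable_rpow_mul_exp_neg_mul_sq hb (s := 2) (by norm_num)
  refine h.congr (ae_of_all _ fun x => ?_)
  simp only [Real.rpow_two]

lemma my_integrable_quad_exp {b : ℝ} (hb : 0 < b) (A B C : ℝ) :
    Integrable fun x : ℝ => (A * x ^ 2 + B * x + C) * exp (-b * x ^ 2) := by
  have h2 : Integrable fun x : ℝ => A * (x ^ 2 * exp (-b * x ^ 2)) :=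
    (my_int_sq_exp hb).const_mul A
  have h1 : Integrable fun x : ℝ => B * (x * exp (-b * x ^ 2)) :=
    (integrable_mul_exp_neg_mul_sq hb).const_mul B
  have h0 : Integrable fun x : ℝ => C * exp (-b * x ^ 2) :=
    (integrable_exp_neg_mul_sq hb).const_mul C
  have := (h2.add h1).add h0
  refine this.congr (ae_of_all _ fun x => ?_)
  simp only [Pi.add_apply]; ring

lemma my_integral_lin_exp {b : ℝ} : ∫ x : ℝ, x * exp (-b * x ^ 2) = 0 := by
  have h1 : ∫ x : ℝ, (fun y : ℝ => y * exp (-b * y ^ 2)) (-x)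
      = ∫ x : ℝ, (fun y : ℝ => y * exp (-b * y ^ 2)) x := by
    conv_rhs => rw [← Measure.map_neg_eq_self (volume : Measure ℝ)]
    exact ((Homeomorph.neg ℝ).measurableEmbedding.integral_map
      (fun y : ℝ => y * exp (-b * y ^ 2))).symm
  simp only [neg_sq, neg_mul] at h1
  have h2 : (∫ x : ℝ, -(x * exp (-(b * x ^ 2)))) = -∫ x : ℝ, x * exp (-(b * x ^ 2)) :=
    integral_neg (μ := (volume : Measure ℝ)) (f := fun x : ℝ => x * exp (-(b * x ^ 2)))
  rw [h2] at h1
  simp only [neg_mul]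
  linarith

lemma my_integral_sq_exp {b : ℝ} (hb : 0 < b) :
    ∫ x : ℝ, x ^ 2 * exp (-b * x ^ 2) = √(π / b) / (2 * b) := by
  have habs := integral_comp_abs (f := fun y : ℝ => y ^ 2 * exp (-b * y ^ 2))
  simp only [sq_abs] at habs
  have hIoi : ∫ x in Ioi (0:ℝ), x ^ 2 * exp (-b * x ^ 2)
      = b ^ (-(2+1)/2 : ℝ) * (1/2) * Real.Gamma ((2+1)/2) := by
    rw [← integral_rpow_mul_exp_neg_mul_rpow (p := 2) (q := 2) (by norm_num) (by norm_num) hb]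
    refine setIntegral_congr_fun measurableSet_Ioi fun x hx => ?_
    simp only [Real.rpow_two]
  have hG : Real.Gamma ((2+1)/2 : ℝ) = (1/2) * √π := by
    have h3 : ((2+1)/2 : ℝ) = 1/2 + 1 := by norm_num
    rw [h3, Real.Gamma_add_one (by norm_num), Real.Gamma_one_half_eq]
  rw [habs, hIoi, hG]
  rw [Real.sqrt_eq_rpow (π / b), Real.div_rpow pi_pos.le hb.le, ← Real.sqrt_eq_rpow]
  rw [show (-(2+1)/2 : ℝ) = (-(1/2)) + (-1) by norm_num, Real.rpow_add hb,
    Real.rpow_neg_one, Real.rpow_neg hb.le, ← Real.sqrt_eq_rpow]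
  have hsb : √b ≠ 0 := by positivity
  have hsp : (0:ℝ) < √π := Real.sqrt_pos.mpr pi_pos
  field_simp

lemma my_integral_quad_exp {b : ℝ} (hb : 0 < b) (A B C : ℝ) :
    ∫ x : ℝ, (A * x ^ 2 + B * x + C) * exp (-b * x ^ 2)
      = A * (√(π / b) / (2 * b)) + C * √(π / b) := by
  have h2 : Integrable fun x : ℝ => A * (x ^ 2 * exp (-b * x ^ 2)) :=
    (my_int_sq_exp hb).const_mul A
  have h1 : Integrable fun x : ℝ => B * (x * exp (-b * x ^ 2)) :=
    (integrable_mul_exp_neg_mul_sq hb).const_mul B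
  have h0 : Integrable fun x : ℝ => C * exp (-b * x ^ 2) :=
    (integrable_exp_neg_mul_sq hb).const_mul C
  have heq : (fun x : ℝ => (A * x ^ 2 + B * x + C) * exp (-b * x ^ 2))
      = fun x : ℝ => A * (x ^ 2 * exp (-b * x ^ 2)) + B * (x * exp (-b * x ^ 2))
          + C * exp (-b * x ^ 2) := by funext x; ring
  have h21 : Integrable fun x : ℝ =>
      A * (x ^ 2 * exp (-b * x ^ 2)) + B * (x * exp (-b * x ^ 2)) := h2.add h1
  rw [heq, integral_add h21 h0]
  rw [integral_add h2 h1, integral_const_mul, integral_const_mul, integral_const_mul,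
    my_integral_sq_exp hb, my_integral_lin_exp, integral_gaussian]
  ring

lemma gauss_pdf_eq {v : ℝ} (hv : 0 < v) (x : ℝ) :
    gaussianPDFReal 0 (Real.toNNReal v) x = (√(2 * π * v))⁻¹ * exp (-(2 * v)⁻¹ * x ^ 2) := by
  simp only [gaussianPDFReal, Real.coe_toNNReal v hv.le, sub_zero]
  rw [show -x ^ 2 / (2 * v) = -(2 * v)⁻¹ * x ^ 2 by ring]

lemma gauss_quad_integrable {v : ℝ} (hv : 0 < v) (A B C : ℝ) :
    Integrable fun x : ℝ =>
      gaussianPDFReal 0 (Real.toNNReal v) x * (A * x ^ 2 + B * x + C) := by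
  have hb : (0:ℝ) < (2 * v)⁻¹ := by positivity
  have := ((my_integrable_quad_exp hb A B C).const_mul (√(2 * π * v))⁻¹)
  refine this.congr (ae_of_all _ fun x => ?_)
  simp only [gauss_pdf_eq hv]; ring

lemma gauss_quad_integral {v : ℝ} (hv : 0 < v) (A B C : ℝ) :
    ∫ x : ℝ, gaussianPDFReal 0 (Real.toNNReal v) x * (A * x ^ 2 + B * x + C) = A * v + C := by
  have hb : (0:ℝ) < (2 * v)⁻¹ := by positivity
  have heq : (fun x : ℝ => gaussianPDFReal 0 (Real.toNNReal v) x * (A * x ^ 2 + B * x + C))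
      = fun x : ℝ => (√(2 * π * v))⁻¹ * ((A * x ^ 2 + B * x + C) * exp (-(2 * v)⁻¹ * x ^ 2)) := by
    funext x; rw [gauss_pdf_eq hv]; ring
  rw [heq, integral_const_mul, my_integral_quad_exp hb]
  have hs : √(π / (2 * v)⁻¹) = √(2 * π * v) := by congr 1; field_simp
  have hsp : (0:ℝ) < √(2 * π * v) := Real.sqrt_pos.mpr (by positivity)
  rw [hs]
  have h2b : (2 * (2 * v)⁻¹) = v⁻¹ := by field_simp
  rw [h2b]
  field_simp

lemma gaussKL_eq {μ σ γ : ℝ} (hσ : 0 < σ) (hγ : 0 < γ) :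
    gaussKL μ σ γ = (γ * (μ ^ 2 + σ ^ 2) - Real.log (σ ^ 2) - Real.log γ - 1) / 2 := by
  have hv : (0:ℝ) < σ ^ 2 := by positivity
  have hγi : (0:ℝ) < γ⁻¹ := by positivity
  set v : ℝ := σ ^ 2 with hv_def
  set vn : ℝ≥0 := Real.toNNReal v with hvn_def
  set un : ℝ≥0 := Real.toNNReal γ⁻¹ with hun_def
  have hvn : vn ≠ 0 := (Real.toNNReal_pos.mpr hv).ne'
  have hun : un ≠ 0 := (Real.toNNReal_pos.mpr hγi).ne'
  have hvnc : (vn : ℝ) = v := Real.coe_toNNReal _ hv.le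
  have hunc : (un : ℝ) = γ⁻¹ := Real.coe_toNNReal _ hγi.le
  set q : Measure ℝ := gaussianReal μ vn with hq_def
  set p : Measure ℝ := gaussianReal 0 un with hp_def
  have hqp : q ≪ p :=
    (gaussianReal_absolutelyContinuous _ hvn).trans (gaussianReal_absolutelyContinuous' _ hun)
  set f : ℝ → ℝ≥0∞ := fun x => gaussianPDF μ vn x * (gaussianPDF 0 un x)⁻¹ with hf_def
  have hf_meas : Measurable f := (measurable_gaussianPDF _ _).mul (measurable_gaussianPDF _ _).inv
  have hq_eq : q = p.withDensity f := by
    rw [hq_def, hp_def, gaussianReal_of_var_ne_zero _ hun, gaussianReal_of_var_ne_zero _ hvn,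
      ← withDensity_mul _ (measurable_gaussianPDF _ _) hf_meas]
    congr 1
    funext x
    simp only [Pi.mul_apply, hf_def]
    rw [mul_comm (gaussianPDF μ vn x) _, ← mul_assoc,
      ENNReal.mul_inv_cancel (gaussianPDF_pos 0 hun x).ne' ENNReal.ofReal_ne_top, one_mul]
  have hrn : q.rnDeriv p =ᵐ[p] f := by
    rw [hq_eq]; exact Measure.rnDeriv_withDensity p hf_meas
  have hrnq : q.rnDeriv p =ᵐ[q] f := hqp.ae_eq hrn
  -- the explicit log-likelihood ratio
  set L : ℝ → ℝ := fun x =>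
    (-Real.log (√(2 * π * v)) + -(x - μ) ^ 2 / (2 * v))
      - (-Real.log (√(2 * π * γ⁻¹)) + -(x - 0) ^ 2 / (2 * γ⁻¹)) with hL_def
  have hllr : llr q p =ᵐ[q] L := by
    filter_upwards [hrnq] with x hx
    show Real.log ((q.rnDeriv p) x).toReal = L x
    rw [hx]
    simp only [hf_def]
    have h1 : (gaussianPDF μ vn x * (gaussianPDF 0 un x)⁻¹).toReal
        = gaussianPDFReal μ vn x * (gaussianPDFReal 0 un x)⁻¹ := by
      rw [ENNReal.toReal_mul, ENNReal.toReal_inv, gaussianPDF, gaussianPDF,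
        ENNReal.toReal_ofReal (gaussianPDFReal_nonneg _ _ _),
        ENNReal.toReal_ofReal (gaussianPDFReal_nonneg _ _ _)]
    rw [h1, Real.log_mul (gaussianPDFReal_pos _ _ _ hvn).ne'
      (inv_pos.mpr (gaussianPDFReal_pos _ _ _ hun)).ne', Real.log_inv]
    rw [gaussianPDFReal, gaussianPDFReal, hvnc, hunc,
      Real.log_mul (by positivity) (exp_pos _).ne', Real.log_mul (by positivity) (exp_pos _).ne',
      Real.log_exp, Real.log_exp, Real.log_inv, Real.log_inv]
    simp only [hL_def]
    ring
  -- integrability of L with respect to q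
  set A : ℝ := γ / 2 - (2 * v)⁻¹ with hA_def
  set B : ℝ := γ * μ with hB_def
  set C : ℝ := γ * μ ^ 2 / 2 + Real.log (√(2 * π * γ⁻¹)) - Real.log (√(2 * π * v)) with hC_def
  have hLquad : ∀ x : ℝ, L x = A * (x - μ) ^ 2 + B * (x - μ) + C := by
    intro x
    simp only [hL_def, hA_def, hB_def, hC_def]
    have h2v : (2 * v) ≠ 0 := by positivity
    have h2γ : (2 * γ⁻¹) ≠ 0 := by positivity
    field_simp
    ring
  have hL_int : Integrable L q := by
    rw [hq_def, gaussianReal_of_var_ne_zero _ hvn, gaussianPDF_def]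
    rw [my_integrable_withDensity_ofReal (measurable_gaussianPDFReal _ _)
      (gaussianPDFReal_nonneg _ _)]
    have base := gauss_quad_integrable hv A B C
    have hcs := base.comp_sub_right μ
    refine hcs.congr (ae_of_all _ fun x => ?_)
    show gaussianPDFReal 0 (Real.toNNReal v) (x - μ) * (A * (x - μ) ^ 2 + B * (x - μ) + C)
      = gaussianPDFReal μ vn x * L x
    rw [gaussianPDFReal_sub, zero_add, hLquad x]
  have h_int : Integrable (llr q p) q := hL_int.congr hllr.symm
  -- the integral
  have hInt : ∫ x, llr q p x ∂q
      = (γ * (μ ^ 2 + σ ^ 2) - Real.log (σ ^ 2) - Real.log γ - 1) / 2 := by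
    rw [integral_congr_ae hllr]
    rw [hq_def, gaussianReal_of_var_ne_zero _ hvn, gaussianPDF_def]
    rw [my_integral_withDensity_ofReal (measurable_gaussianPDFReal _ _)
      (gaussianPDFReal_nonneg _ _) L]
    have hshift : ∫ x, gaussianPDFReal μ vn x * L x
        = ∫ x, gaussianPDFReal μ vn (x + μ) * L (x + μ) := by
      exact (integral_add_right_eq_self (fun x => gaussianPDFReal μ vn x * L x) μ).symm
    rw [hshift]
    have heq : (fun x => gaussianPDFReal μ vn (x + μ) * L (x + μ))
        = fun x => gaussianPDFReal 0 (Real.toNNReal v) x * (A * x ^ 2 + B * x + C) := by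
      funext x
      rw [gaussianPDFReal_add, sub_self, hLquad (x + μ)]
      rw [← hvn_def]
      ring_nf
    rw [heq, gauss_quad_integral hv A B C]
    -- now pure algebra
    rw [hA_def, hC_def]
    have hlog1 : Real.log (√(2 * π * γ⁻¹)) = (Real.log (2 * π) + Real.log γ⁻¹) / 2 := by
      rw [Real.log_sqrt (by positivity), Real.log_mul (by positivity) (by positivity)]
    have hlog2 : Real.log (√(2 * π * v)) = (Real.log (2 * π) + Real.log v) / 2 := by
      rw [Real.log_sqrt (by positivity), Real.log_mul (by positivity) (by positivity)]
    rw [hlog1, hlog2, Real.log_inv, hv_def]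
    have hvne : v ≠ 0 := hv.ne'
    field_simp
    ring
  have hval : 0 ≤ (γ * (μ ^ 2 + σ ^ 2) - Real.log (σ ^ 2) - Real.log γ - 1) / 2 := by
    have hlog : Real.log (γ * σ ^ 2) ≤ γ * σ ^ 2 - 1 :=
      Real.log_le_sub_one_of_pos (by positivity)
    rw [Real.log_mul hγ.ne' (by positivity : (σ:ℝ) ^ 2 ≠ 0)] at hlog
    have hμ : 0 ≤ γ * μ ^ 2 := by positivity
    nlinarith
  show (klDiv q p).toReal = _
  simp only [klDiv]
  rw [if_pos ⟨hqp, h_int⟩, hInt, ENNReal.toReal_ofReal hval]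

lemma intOn {s b : ℝ} (hs : 0 < s) (hb : 0 < b) :
    IntegrableOn (fun x : ℝ => x ^ (s - 1) * exp (-(b * x))) (Ioi 0) := by
  have h := Real.GammaIntegral_convergent hs
  have h2 : IntegrableOn (fun x : ℝ => exp (-(b * x)) * (b * x) ^ (s - 1)) (Ioi 0) := by
    have := (integrableOn_Ioi_comp_mul_left_iff
      (fun x : ℝ => exp (-x) * x ^ (s - 1)) 0 hb).mpr (by simpa using h)
    simpa using this
  have h3 : IntegrableOn (fun x : ℝ => ((b:ℝ) ^ (s - 1))⁻¹
      * (exp (-(b * x)) * (b * x) ^ (s - 1))) (Ioi 0) := h2.const_mul _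
  refine IntegrableOn.congr_fun h3 (fun x hx => ?_) measurableSet_Ioi
  rw [Real.mul_rpow hb.le (le_of_lt (show (0:ℝ) < x from hx))]
  have : (b:ℝ) ^ (s - 1) ≠ 0 := by positivity
  field_simp

lemma gamma_ae_pos {a r : ℝ} : ∀ᵐ x ∂gammaMeasure a r, 0 < x := by
  rw [ae_iff]
  have hset : {x : ℝ | ¬ 0 < x} = Iic 0 := by ext x; simp
  rw [hset]
  have h1 : gammaMeasure a r (Iio 0) = 0 := by
    rw [gammaMeasure, withDensity_apply _ measurableSet_Iio]
    exact lintegral_gammaPDF_of_nonpos le_rfl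
  have h2 : gammaMeasure a r {(0:ℝ)} = 0 := by
    apply (withDensity_absolutelyContinuous (volume : Measure ℝ) _)
    simp
  have : gammaMeasure a r (Iic 0) ≤ gammaMeasure a r (Iio 0) + gammaMeasure a r {(0:ℝ)} := by
    rw [show Iic (0:ℝ) = Iio 0 ∪ {0} by ext x; simp [le_iff_lt_or_eq]]
    exact measure_union_le _ _
  simpa [h1, h2] using this

lemma gamma_indicator (a r : ℝ) (g : ℝ → ℝ) (hg0 : g 0 = 0) :
    (fun x => gammaPDFReal a r x * g x) = (Ioi (0:ℝ)).indicator
      (fun x => (r ^ a / Real.Gamma a) * (x ^ (a - 1) * exp (-(r * x))) * g x) := by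
  funext x
  rcases lt_trichotomy x 0 with hx | hx | hx
  · simp [indicator_of_notMem (by simpa using hx.le.not_gt : x ∉ Ioi (0:ℝ)),
      gammaPDFReal, not_le.mpr hx]
  · subst hx; simp [hg0]
  · rw [indicator_of_mem (by exact hx : x ∈ Ioi (0:ℝ)), gammaPDFReal, if_pos hx.le]
    ring

lemma integrable_id_gamma {a r : ℝ} (ha : 0 < a) (hr : 0 < r) :
    Integrable (fun x => x) (gammaMeasure a r) := by
  have hpdf : gammaPDF a r = fun x => ENNReal.ofReal (gammaPDFReal a r x) := rfl
  rw [gammaMeasure, hpdf, my_integrable_withDensity_ofReal (measurable_gammaPDFReal a r)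
    (gammaPDFReal_nonneg ha hr)]
  rw [gamma_indicator a r _ rfl, integrable_indicator_iff measurableSet_Ioi]
  have h : IntegrableOn (fun x : ℝ => r ^ a / Real.Gamma a * (x ^ (a + 1 - 1)
      * exp (-(r * x)))) (Ioi 0) := (intOn (s := a + 1) (by linarith) hr).const_mul _
  refine IntegrableOn.congr_fun h (fun x hx => ?_) measurableSet_Ioi
  have hx0 : (0:ℝ) < x := hx
  rw [show a + 1 - 1 = (a - 1) + 1 by ring, Real.rpow_add hx0, Real.rpow_one]
  ring

lemma integral_id_gamma {a r : ℝ} (ha : 0 < a) (hr : 0 < r) :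
    ∫ x, x ∂gammaMeasure a r = a / r := by
  have hpdf : gammaPDF a r = fun x => ENNReal.ofReal (gammaPDFReal a r x) := rfl
  rw [gammaMeasure, hpdf, my_integral_withDensity_ofReal (measurable_gammaPDFReal a r)
    (gammaPDFReal_nonneg ha hr)]
  rw [gamma_indicator a r _ rfl, integral_indicator measurableSet_Ioi]
  have heq : ∀ x ∈ Ioi (0:ℝ), (r ^ a / Real.Gamma a) * (x ^ (a - 1) * exp (-(r * x))) * x
      = (r ^ a / Real.Gamma a) * (x ^ (a + 1 - 1) * exp (-(r * x))) := by
    intro x hx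
    have hx0 : (0:ℝ) < x := hx
    rw [show a + 1 - 1 = (a - 1) + 1 by ring, Real.rpow_add hx0, Real.rpow_one]
    ring
  rw [setIntegral_congr_fun measurableSet_Ioi heq, integral_const_mul,
    integral_rpow_mul_exp_neg_mul_Ioi (by linarith : (0:ℝ) < a + 1) hr,
    Real.Gamma_add_one ha.ne']
  have hΓ : Real.Gamma a ≠ 0 := (Real.Gamma_pos_of_pos ha).ne'
  rw [Real.div_rpow (by norm_num) hr.le, Real.one_rpow]
  have h1 : (r:ℝ) ^ (a + 1) = r ^ a * r := by
    rw [Real.rpow_add hr, Real.rpow_one]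
  rw [h1]
  have hra : (r:ℝ) ^ a ≠ 0 := by positivity
  field_simp

lemma abs_log_le {a x : ℝ} (ha : 0 < a) (hx : 0 < x) :
    |Real.log x| ≤ x + (2 / a) * x ^ (-(a / 2)) := by
  have hq : (0:ℝ) < x ^ (-(a / 2)) := Real.rpow_pos_of_pos hx _
  rcases le_or_gt 1 x with h1 | h1
  · rw [abs_of_nonneg (Real.log_nonneg h1)]
    have := Real.log_le_sub_one_of_pos hx
    have h2 : 0 ≤ (2 / a) * x ^ (-(a / 2)) := by positivity
    linarith
  · rw [abs_of_nonpos (Real.log_nonpos hx.le h1.le)]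
    have hxi : 0 < x⁻¹ := by positivity
    have key : Real.log (x⁻¹ ^ (a / 2)) ≤ x⁻¹ ^ (a / 2) - 1 :=
      Real.log_le_sub_one_of_pos (Real.rpow_pos_of_pos hxi _)
    rw [Real.log_rpow hxi, Real.log_inv] at key
    have hpow : x⁻¹ ^ (a / 2) = x ^ (-(a / 2)) := by
      rw [← Real.rpow_neg_one x, ← Real.rpow_mul hx.le]
      norm_num
    rw [hpow] at key
    have ha2 : (0:ℝ) < a / 2 := half_pos ha
    have e1 : -Real.log x = (2 / a) * (a / 2 * -Real.log x) := by field_simp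
    have e2 : (2 / a) * (a / 2 * -Real.log x) ≤ (2 / a) * (x ^ (-(a / 2)) - 1) := by
      apply mul_le_mul_of_nonneg_left _ (by positivity)
      linarith
    have e3 : (2 / a) * (x ^ (-(a / 2)) - 1) ≤ (2 / a) * x ^ (-(a / 2)) := by
      have : (0:ℝ) < 2 / a := by positivity
      nlinarith
    linarith

lemma integrable_log_gamma {a r : ℝ} (ha : 0 < a) (hr : 0 < r) :
    Integrable Real.log (gammaMeasure a r) := by
  have hpdf : gammaPDF a r = fun x => ENNReal.ofReal (gammaPDFReal a r x) := rfl
  rw [gammaMeasure, hpdf, my_integrable_withDensity_ofReal (measurable_gammaPDFReal a r)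
    (gammaPDFReal_nonneg ha hr)]
  rw [gamma_indicator a r Real.log Real.log_zero, integrable_indicator_iff measurableSet_Ioi]
  set c := r ^ a / Real.Gamma a with hc_def
  have hc : 0 ≤ c := by positivity
  have hdom : IntegrableOn (fun x : ℝ => c * (x ^ (a + 1 - 1) * exp (-(r * x)))
      + c * ((2 / a) * (x ^ (a / 2 - 1) * exp (-(r * x))))) (Ioi 0) := by
    exact Integrable.add ((intOn (by linarith) hr).const_mul _)
      (((intOn (half_pos ha) hr).const_mul _).const_mul _)
  refine Integrable.mono' hdom ?_ ?_
  · exact ((((measurable_id'.pow_const (a - 1)).mul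
      ((measurable_id'.const_mul r).neg.exp)).const_mul c).mul
      Real.measurable_log).aestronglyMeasurable
  · rw [ae_restrict_iff' measurableSet_Ioi]
    refine ae_of_all _ fun x hx => ?_
    have hx0 : (0:ℝ) < x := hx
    have hpe : (0:ℝ) ≤ x ^ (a - 1) * exp (-(r * x)) := by positivity
    rw [norm_mul, norm_of_nonneg (by positivity : (0:ℝ) ≤ c * (x ^ (a-1) * exp (-(r * x))))]
    have step : c * (x ^ (a - 1) * exp (-(r * x))) * ‖Real.log x‖
        ≤ c * (x ^ (a - 1) * exp (-(r * x))) * (x + (2 / a) * x ^ (-(a / 2))) := by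
      exact mul_le_mul_of_nonneg_left (abs_log_le ha hx0) (by positivity)
    refine step.trans (le_of_eq ?_)
    have r1 : x ^ (a - 1) * x = x ^ (a + 1 - 1) := by
      rw [show a + 1 - 1 = (a - 1) + 1 by ring, Real.rpow_add hx0, Real.rpow_one]
    have r2 : x ^ (a - 1) * x ^ (-(a / 2)) = x ^ (a / 2 - 1) := by
      rw [← Real.rpow_add hx0]; ring_nf
    rw [← r1, ← r2]
    ring

end Helpers

/-- Closed form of the low-rank loss `ℓ_rank` (Eq. 28 of the paper): with
`q(a_i) = ⊗_j N(μ_{a,i,j}, σ_{a,i,j}²)`, `q(b_i) = ⊗_j N(μ_{b,i,j}, σ_{b,i,j}²)`,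
`p(a_i|γ) = N(0, γ⁻¹I_h)`, `p(b_i|γ) = N(0, γ⁻¹I_w)` and `q(γ_i) = Gamma(α_i, β_i)`,
the expected KL `E_{q(γ)}[KL(q(A)q(B) ‖ p(A|γ)p(B|γ))]` equals
`½ Σ_i [ (α_i/β_i)(‖μ_{a,i}‖² + ‖σ_{a,i}‖² + ‖μ_{b,i}‖² + ‖σ_{b,i}‖²)`
`− Σ_j log σ_{a,i,j}² − Σ_j log σ_{b,i,j}² − (h+w)(1 + E_i[log γ]) ]`. -/
theorem expected_kl_rank_closed_form {r h w : ℕ} (α β : Fin r → ℝ)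
    (hα : ∀ i, 0 < α i) (hβ : ∀ i, 0 < β i)
    (μa σa : Fin r → Fin h → ℝ) (μb σb : Fin r → Fin w → ℝ)
    (hσa : ∀ i j, 0 < σa i j) (hσb : ∀ i j, 0 < σb i j) :
    (∑ i, ∫ γ, ((∑ j, gaussKL (μa i j) (σa i j) γ) + ∑ j, gaussKL (μb i j) (σb i j) γ)
        ∂gammaMeasure (α i) (β i)) =
      (1 / 2) * ∑ i,
        ((α i / β i) *
            ((∑ j, μa i j ^ 2) + (∑ j, σa i j ^ 2) + (∑ j, μb i j ^ 2) + ∑ j, σb i j ^ 2)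
          - (∑ j, Real.log (σa i j ^ 2)) - (∑ j, Real.log (σb i j ^ 2))
          - ((h : ℝ) + (w : ℝ)) * (1 + ∫ γ, Real.log γ ∂gammaMeasure (α i) (β i))) := by
  rw [Finset.mul_sum]
  refine Finset.sum_congr rfl fun i _ => ?_
  haveI := isProbabilityMeasure_gammaMeasure (hα i) (hβ i)
  set Sa : ℝ := ∑ j, μa i j ^ 2 with hSa
  set Ta : ℝ := ∑ j, σa i j ^ 2 with hTa
  set Sb : ℝ := ∑ j, μb i j ^ 2 with hSb
  set Tb : ℝ := ∑ j, σb i j ^ 2 with hTb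
  set La : ℝ := ∑ j, Real.log (σa i j ^ 2) with hLa
  set Lb : ℝ := ∑ j, Real.log (σb i j ^ 2) with hLb
  set C1 : ℝ := (Sa + Ta + Sb + Tb) / 2 with hC1
  set C2 : ℝ := -((h : ℝ) + (w : ℝ)) / 2 with hC2
  set C3 : ℝ := (-(La + Lb) - ((h : ℝ) + (w : ℝ))) / 2 with hC3
  have hsum : ∀ γ : ℝ, 0 < γ →
      ((∑ j, gaussKL (μa i j) (σa i j) γ) + ∑ j, gaussKL (μb i j) (σb i j) γ)
        = C1 * γ + C2 * Real.log γ + C3 := by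
    intro γ hγ
    rw [Finset.sum_congr rfl fun j _ => gaussKL_eq (hσa i j) hγ,
      Finset.sum_congr rfl fun j _ => gaussKL_eq (hσb i j) hγ]
    rw [← Finset.sum_div, ← Finset.sum_div]
    simp only [Finset.sum_sub_distrib, Finset.sum_add_distrib, ← Finset.mul_sum,
      Finset.sum_const, Finset.card_univ, Fintype.card_fin, nsmul_eq_mul,
      hC1, hC2, hC3, hSa, hTa, hSb, hTb, hLa, hLb]
    ring
  have hcongr : ∫ γ, ((∑ j, gaussKL (μa i j) (σa i j) γ) + ∑ j, gaussKL (μb i j) (σb i j) γ)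
      ∂gammaMeasure (α i) (β i)
      = ∫ γ, (C1 * γ + C2 * Real.log γ + C3) ∂gammaMeasure (α i) (β i) := by
    refine integral_congr_ae ?_
    filter_upwards [gamma_ae_pos (a := α i) (r := β i)] with γ hγ
    exact hsum γ hγ
  have i1 : Integrable (fun γ : ℝ => C1 * γ) (gammaMeasure (α i) (β i)) :=
    (integrable_id_gamma (hα i) (hβ i)).const_mul C1
  have i2 : Integrable (fun γ : ℝ => C2 * Real.log γ) (gammaMeasure (α i) (β i)) :=
    (integrable_log_gamma (hα i) (hβ i)).const_mul C2
  have i3 : Integrable (fun _ : ℝ => C3) (gammaMeasure (α i) (β i)) := integrable_const C3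
  have i12 : Integrable (fun γ : ℝ => C1 * γ + C2 * Real.log γ) (gammaMeasure (α i) (β i)) :=
    i1.add i2
  rw [hcongr, integral_add i12 i3, integral_add i1 i2, integral_const_mul, integral_const_mul,
    integral_const, integral_id_gamma (hα i) (hβ i)]
  simp only [measure_univ, probReal_univ, ENNReal.toReal_one, smul_eq_mul, one_mul]
  simp only [hC1, hC2, hC3]
  ring
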